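/- A compact metric dynamical system (X,T) is proximal (every pair of points is proximal) if and only if there exists a fixed point e ∈ X which is the unique minimal subset of X. Consequently, if (X,T) is proximal then so is (X,T^{-1}). -/

import Mathlib

open Filter Topology

/-- A pair `(x,y)` is proximal: `liminf_{n → +∞} d(Tⁿ x, Tⁿ y) = 0`. -/
def ProximalPair {X : Type*} [PseudoMetricSpace X] (T : X ≃ₜ X) (x y : X) : Prop :=
  Filter.liminf (fun n : ℕ => dist ((⇑T)^[n] x) ((⇑T)^[n] y)) atTop = 0

/-- The system `(X,T)` is proximal: every pair is proximal. -/
def ProximalSystem {X : Type*} [PseudoMetricSpace X] (T : X ≃ₜ X) : Prop :=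
  ∀ x y : X, ProximalPair T x y

/-- A minimal subset: a nonempty closed invariant set with no proper nonempty closed
invariant subset. -/
def IsMinimalSet {X : Type*} [TopologicalSpace X] (T : X ≃ₜ X) (M : Set X) : Prop :=
  M.Nonempty ∧ IsClosed M ∧ ⇑T '' M = M ∧
    ∀ M' ⊆ M, M'.Nonempty → IsClosed M' → ⇑T '' M' = M' → M' = M

section Aux

variable {Y : Type*} [TopologicalSpace Y]

lemma image_eq_preimage_symm_aux (S : Y ≃ₜ Y) (B : Set Y) : ⇑S '' B = ⇑S.symm ⁻¹' B := by
  ext z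
  constructor
  · rintro ⟨w, hw, rfl⟩; simpa using hw
  · intro hz; exact ⟨S.symm z, hz, by simp⟩

lemma image_symm_eq_aux (S : Y ≃ₜ Y) {M : Set Y} (h : ⇑S '' M = M) : ⇑S.symm '' M = M := by
  conv_lhs => rw [← h]
  rw [← Set.image_comp]
  simp

lemma iterate_mem_aux (S : Y ≃ₜ Y) {M : Set Y} (h : ⇑S '' M = M) {x : Y} (hx : x ∈ M) :
    ∀ n : ℕ, (⇑S)^[n] x ∈ M := by
  intro n
  induction n with
  | zero => simpa using hx
  | succ n ih =>
    rw [Function.iterate_succ_apply']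
    rw [← h]
    exact Set.mem_image_of_mem _ ih

/-- Every nonempty compact closed invariant set contains a minimal set. -/
lemma exists_minimal_subset_aux [T2Space Y] (S : Y ≃ₜ Y) {A : Set Y} (hAn : A.Nonempty)
    (hAc : IsCompact A) (hAcl : IsClosed A) (hinv : ⇑S '' A = A) :
    ∃ M ⊆ A, IsMinimalSet S M := by
  set 𝒮 : Set (Set Y) := {B | B ⊆ A ∧ B.Nonempty ∧ IsClosed B ∧ ⇑S '' B = B} with h𝒮
  have key : ∀ c ⊆ 𝒮, IsChain (· ⊆ ·) c → c.Nonempty → ∃ lb ∈ 𝒮, ∀ s ∈ c, lb ⊆ s := by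
    intro c hc𝒮 hchain hcne
    refine ⟨⋂₀ c, ?_, fun s hs => Set.sInter_subset_of_mem hs⟩
    have hdir : DirectedOn (· ⊇ ·) c := by
      intro u hu v hv
      rcases hchain.total hu hv with h | h
      · exact ⟨u, hu, le_refl _, h⟩
      · exact ⟨v, hv, h, le_refl _⟩
    have : Nonempty c := hcne.to_subtype
    refine ⟨?_, ?_, ?_, ?_⟩
    · obtain ⟨b, hb⟩ := hcne
      exact (Set.sInter_subset_of_mem hb).trans (hc𝒮 hb).1
    · exact IsCompact.nonempty_sInter_of_directed_nonempty_isCompact_isClosed hdir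
        (fun U hU => (hc𝒮 hU).2.1)
        (fun U hU => hAc.of_isClosed_subset (hc𝒮 hU).2.2.1 (hc𝒮 hU).1)
        (fun U hU => (hc𝒮 hU).2.2.1)
    · exact isClosed_sInter fun U hU => (hc𝒮 hU).2.2.1
    · rw [image_eq_preimage_symm_aux, Set.preimage_sInter]
      have h2 : ∀ U ∈ c, ⇑S.symm ⁻¹' U = U := by
        intro U hU
        rw [← image_eq_preimage_symm_aux, (hc𝒮 hU).2.2.2]
      rw [Set.sInter_eq_biInter]
      exact Set.iInter₂_congr h2
  obtain ⟨M, hMA, hMmem, hMmin⟩ := zorn_superset_nonempty 𝒮 key A ⟨subset_rfl, hAn, hAcl, hinv⟩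
  refine ⟨M, hMmem.1, hMmem.2.1, hMmem.2.2.1, hMmem.2.2.2, ?_⟩
  intro M' hM'M hM'n hM'cl hM'inv
  have hM'mem : M' ∈ 𝒮 := ⟨hM'M.trans hMmem.1, hM'n, hM'cl, hM'inv⟩
  exact le_antisymm hM'M (hMmin hM'mem hM'M)

end Aux

section MetricAux

variable {X : Type*} [MetricSpace X] [CompactSpace X]

lemma dist_bounded_aux (u : ℕ → X) (v : ℕ → X) :
    ∃ C : ℝ, ∀ n, dist (u n) (v n) ≤ C := by
  obtain ⟨C, hC⟩ := Metric.isBounded_iff.mp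
    (isCompact_univ : IsCompact (Set.univ : Set X)).isBounded
  exact ⟨C, fun n => hC (Set.mem_univ _) (Set.mem_univ _)⟩

lemma frequently_lt_of_liminf_eq_zero_aux {u : ℕ → ℝ} {v : ℕ → X} {w : ℕ → X}
    (huv : ∀ n, u n = dist (v n) (w n))
    (h : Filter.liminf u atTop = 0) {ε : ℝ} (hε : 0 < ε) : ∃ᶠ n in atTop, u n < ε := by
  by_contra hcon
  rw [Filter.not_frequently] at hcon
  have hev : ∀ᶠ n in atTop, ε ≤ u n := hcon.mono fun n h => le_of_not_gt h
  obtain ⟨C, hC⟩ := dist_bounded_aux v w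
  have hbd : Filter.IsBoundedUnder (· ≤ ·) atTop u :=
    Filter.isBoundedUnder_of ⟨C, fun n => by rw [huv n]; exact hC n⟩
  have := Filter.le_liminf_of_le hbd.isCoboundedUnder_ge hev
  rw [h] at this
  linarith

/-- Every minimal set of a compact metric proximal system is a singleton fixed point. -/
lemma minimal_singleton_aux (T : X ≃ₜ X) (h : ProximalSystem T) {M : Set X}
    (hM : IsMinimalSet T M) : ∃ z : X, T z = z ∧ M = {z} := by
  obtain ⟨hMn, hMcl, hMinv, hMmin⟩ := hM
  obtain ⟨x, hx⟩ := hMn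
  have hMc : IsCompact M := hMcl.isCompact
  have hg : Continuous fun z : X => dist z (T z) := continuous_id.dist T.continuous
  obtain ⟨z₀, hz₀M, hz₀min⟩ := hMc.exists_isMinOn ⟨x, hx⟩ hg.continuousOn
  have hfix : dist z₀ (T z₀) = 0 := by
    refine le_antisymm ?_ dist_nonneg
    by_contra hpos
    push_neg at hpos
    set ε := dist z₀ (T z₀) with hεdef
    have hε : 0 < ε := hpos
    have hprox := h x (T x)
    have hform : ∀ n : ℕ, dist ((⇑T)^[n] x) ((⇑T)^[n] (T x)) =
        dist ((⇑T)^[n] x) (T ((⇑T)^[n] x)) := by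
      intro n
      rw [← Function.iterate_succ_apply, Function.iterate_succ_apply']
    have hfreq := frequently_lt_of_liminf_eq_zero_aux
      (u := fun n => dist ((⇑T)^[n] x) ((⇑T)^[n] (T x)))
      (v := fun n => (⇑T)^[n] x) (w := fun n => (⇑T)^[n] (T x)) (fun n => rfl) hprox hε
    obtain ⟨n, -, hn0⟩ := (Filter.frequently_atTop.mp hfreq) 0
    have hn : dist ((⇑T)^[n] x) ((⇑T)^[n] (T x)) < ε := hn0
    have hmem : (⇑T)^[n] x ∈ M := iterate_mem_aux T hMinv hx n
    have := hz₀min hmem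
    rw [hform n] at hn
    simp only [Set.mem_setOf_eq] at this
    have : ε ≤ dist ((⇑T)^[n] x) (T ((⇑T)^[n] x)) := this
    linarith
  have hTz₀ : T z₀ = z₀ := (eq_of_dist_eq_zero hfix).symm
  refine ⟨z₀, hTz₀, ?_⟩
  refine (hMmin {z₀} (Set.singleton_subset_iff.mpr hz₀M) ⟨z₀, rfl⟩ isClosed_singleton ?_).symm
  rw [Set.image_singleton, hTz₀]

/-- The forward direction. -/
lemma forward_aux [Nonempty X] (T : X ≃ₜ X) (h : ProximalSystem T) :
    ∃ e : X, T e = e ∧ IsMinimalSet T {e} ∧ ∀ M : Set X, IsMinimalSet T M → M = {e} := by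
  have huniv : ⇑T '' Set.univ = Set.univ := by
    rw [Set.image_univ]; exact T.surjective.range_eq
  obtain ⟨M, -, hM⟩ := exists_minimal_subset_aux T Set.univ_nonempty isCompact_univ
    isClosed_univ huniv
  obtain ⟨e, hTe, hMe⟩ := minimal_singleton_aux T h hM
  have hsingle : IsMinimalSet T {e} := by
    refine ⟨⟨e, rfl⟩, isClosed_singleton, by rw [Set.image_singleton, hTe], ?_⟩
    intro M' hM' hM'n _ _
    exact le_antisymm hM' (by
      obtain ⟨z, hz⟩ := hM'n
      have := hM' hz
      simp only [Set.mem_singleton_iff] at this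
      subst this
      exact Set.singleton_subset_iff.mpr hz)
  refine ⟨e, hTe, hsingle, ?_⟩
  intro N hN
  obtain ⟨z, hTz, hNz⟩ := minimal_singleton_aux T h hN
  have hprox := h z e
  have hconst : ∀ n : ℕ, dist ((⇑T)^[n] z) ((⇑T)^[n] e) = dist z e := by
    intro n
    rw [Function.iterate_fixed hTz, Function.iterate_fixed hTe]
  unfold ProximalPair at hprox
  simp only [hconst] at hprox
  rw [Filter.liminf_const] at hprox
  rw [hNz, show z = e from eq_of_dist_eq_zero hprox]

lemma prod_iterate_aux (T : X ≃ₜ X) (p : X × X) (n : ℕ) :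
    (⇑(T.prodCongr T))^[n] p = ((⇑T)^[n] p.1, (⇑T)^[n] p.2) := by
  induction n with
  | zero => simp
  | succ n ih =>
    rw [Function.iterate_succ_apply', ih, Function.iterate_succ_apply',
      Function.iterate_succ_apply']
    rfl

/-- The backward direction. -/
lemma backward_aux (T : X ≃ₜ X) (e : X) (he : T e = e)
    (huniq : ∀ M : Set X, IsMinimalSet T M → M = {e}) : ProximalSystem T := by
  intro x y
  set S : (X × X) ≃ₜ (X × X) := T.prodCongr T with hS
  set p : X × X := (x, y) with hp
  -- orbit tails and their closures
  set orb : ℕ → Set (X × X) := fun N => (fun n => (⇑S)^[n] p) '' Set.Ici N with horb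
  set C : ℕ → Set (X × X) := fun N => closure (orb N) with hC
  have horbS : ∀ N, ⇑S '' orb N = orb (N + 1) := by
    intro N
    ext q
    simp only [horb, Set.image_image, Set.mem_image, Set.mem_Ici]
    constructor
    · rintro ⟨n, hn, rfl⟩
      exact ⟨n + 1, by omega, by rw [Function.iterate_succ_apply']⟩
    · rintro ⟨n, hn, rfl⟩
      obtain ⟨m, rfl⟩ := Nat.exists_eq_add_of_le (show 1 ≤ n by omega)
      refine ⟨m, by omega, ?_⟩
      rw [Nat.one_add]
      exact (Function.iterate_succ_apply' _ _ _).symm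
  have hCanti : ∀ N, C (N + 1) ⊆ C N :=
    fun N => closure_mono (Set.image_mono (Set.Ici_subset_Ici.mpr (Nat.le_succ N)))
  have hCS : ∀ N, ⇑S '' C N = C (N + 1) := by
    intro N
    show ⇑S '' closure (orb N) = closure (orb (N + 1))
    rw [S.image_closure, horbS]
  -- the ω-limit set
  set K : Set (X × X) := ⋂ N, C N with hK
  have hKn : K.Nonempty := by
    apply IsCompact.nonempty_iInter_of_sequence_nonempty_isCompact_isClosed C hCanti
    · intro i
      exact (Set.Nonempty.image _ Set.nonempty_Ici).closure
    · exact isClosed_closure.isCompact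
    · intro i; exact isClosed_closure
  have hKcl : IsClosed K := isClosed_iInter fun N => isClosed_closure
  have hKinv : ⇑S '' K = K := by
    rw [image_eq_preimage_symm_aux, hK, Set.preimage_iInter]
    have h2 : ∀ N, ⇑S.symm ⁻¹' C N = C (N + 1) := by
      intro N
      rw [← hCS N, image_eq_preimage_symm_aux]
    simp only [h2]
    apply le_antisymm
    · intro q hq
      simp only [Set.mem_iInter] at hq ⊢
      intro N
      exact hCanti N (hq N)
    · intro q hq
      simp only [Set.mem_iInter] at hq ⊢
      intro N
      exact hq (N + 1)
  -- a minimal subset of K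
  obtain ⟨N', hN'K, hN'⟩ := exists_minimal_subset_aux S hKn hKcl.isCompact hKcl hKinv
  obtain ⟨hN'n, hN'cl, hN'inv, hN'min⟩ := hN'
  have hN'c : IsCompact N' := hN'cl.isCompact
  -- the first projection of N' contains e
  have proj_inv : ∀ (f : X × X → X), Continuous f → (∀ q : X × X, f (S q) = T (f q)) →
      e ∈ f '' N' := by
    intro f hfc hfS
    have hBn : (f '' N').Nonempty := hN'n.image f
    have hBcl : IsClosed (f '' N') := (hN'c.image hfc).isClosed
    have hBinv : ⇑T '' (f '' N') = f '' N' := by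
      have h1 : ⇑T '' (f '' N') = f '' (⇑S '' N') := by
        rw [Set.image_image, Set.image_image]
        exact Set.image_congr fun q _ => (hfS q).symm
      rw [h1, hN'inv]
    obtain ⟨M, hMB, hM⟩ := exists_minimal_subset_aux T hBn hBcl.isCompact hBcl hBinv
    have := huniq M hM
    rw [this] at hMB
    exact hMB rfl
  have hfst : ∀ q : X × X, (S q).1 = T q.1 := fun q => rfl
  have hsnd : ∀ q : X × X, (S q).2 = T q.2 := fun q => rfl
  obtain ⟨q₁, hq₁N, hq₁e⟩ := proj_inv Prod.fst continuous_fst hfst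
  -- the slice {q ∈ N' | q.1 = e} is invariant, hence equals N'
  have hsymm_e : T.symm e = e := by
    conv_lhs => rw [← he]
    exact T.symm_apply_apply e
  set A : Set (X × X) := N' ∩ (Prod.fst ⁻¹' {e}) with hA
  have hAinv : ⇑S '' A = A := by
    apply le_antisymm
    · rintro _ ⟨q, ⟨hqN, hqe⟩, rfl⟩
      constructor
      · rw [← hN'inv]; exact Set.mem_image_of_mem _ hqN
      · simp only [Set.mem_preimage, Set.mem_singleton_iff] at hqe ⊢
        rw [hfst q, hqe, he]
    · rintro q ⟨hqN, hqe⟩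
      rw [← hN'inv] at hqN
      obtain ⟨r, hrN, rfl⟩ := hqN
      refine ⟨r, ⟨hrN, ?_⟩, rfl⟩
      simp only [Set.mem_preimage, Set.mem_singleton_iff] at hqe ⊢
      rw [hfst r] at hqe
      rw [← hsymm_e, ← hqe]
      simp
  have hAN : A = N' := by
    apply hN'min
    · exact Set.inter_subset_left
    · exact ⟨q₁, hq₁N, by simpa using hq₁e⟩
    · exact hN'cl.inter (isClosed_singleton.preimage continuous_fst)
    · exact hAinv
  -- (e, e) ∈ N'
  obtain ⟨q₂, hq₂N, hq₂e⟩ := proj_inv Prod.snd continuous_snd hsnd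
  have hq₂A : q₂ ∈ A := by rw [hAN]; exact hq₂N
  have hee : (e, e) ∈ N' := by
    have h1 : q₂.1 = e := by simpa using hq₂A.2
    have : q₂ = (e, e) := by
      cases q₂; simp_all
    rw [← this]; exact hq₂N
  have heeK : (e, e) ∈ K := hN'K hee
  -- conclude: the liminf is zero
  unfold ProximalPair
  obtain ⟨Cb, hCb⟩ := dist_bounded_aux (fun n => (⇑T)^[n] x) (fun n => (⇑T)^[n] y)
  have hbd_ge : Filter.IsBoundedUnder (· ≥ ·) atTop
      (fun n : ℕ => dist ((⇑T)^[n] x) ((⇑T)^[n] y)) :=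
    Filter.isBoundedUnder_of ⟨0, fun n => dist_nonneg⟩
  have hbd_le : Filter.IsBoundedUnder (· ≤ ·) atTop
      (fun n : ℕ => dist ((⇑T)^[n] x) ((⇑T)^[n] y)) :=
    Filter.isBoundedUnder_of ⟨Cb, hCb⟩
  apply le_antisymm
  · apply le_of_forall_pos_le_add
    intro ε hε
    rw [zero_add]
    apply Filter.liminf_le_of_frequently_le _ hbd_ge
    rw [Filter.frequently_atTop]
    intro N
    have heeC : (e, e) ∈ C N := Set.mem_iInter.mp heeK N
    rw [hC, Metric.mem_closure_iff] at heeC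
    obtain ⟨q, hq, hdq⟩ := heeC (ε / 2) (by linarith)
    simp only [horb, Set.mem_image, Set.mem_Ici] at hq
    obtain ⟨n, hn, rfl⟩ := hq
    refine ⟨n, hn, ?_⟩
    rw [prod_iterate_aux] at hdq
    rw [Prod.dist_eq] at hdq
    simp only [hp] at hdq
    have h1 : dist e ((⇑T)^[n] x) < ε / 2 := lt_of_le_of_lt (le_max_left _ _) hdq
    have h2 : dist e ((⇑T)^[n] y) < ε / 2 := lt_of_le_of_lt (le_max_right _ _) hdq
    calc dist ((⇑T)^[n] x) ((⇑T)^[n] y)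
        ≤ dist ((⇑T)^[n] x) e + dist e ((⇑T)^[n] y) := dist_triangle _ _ _
      _ = dist e ((⇑T)^[n] x) + dist e ((⇑T)^[n] y) := by rw [dist_comm]
      _ ≤ ε / 2 + ε / 2 := by linarith
      _ = ε := by ring
  · exact Filter.le_liminf_of_le hbd_le.isCoboundedUnder_ge
      (Filter.Eventually.of_forall fun n => dist_nonneg)

lemma minimal_symm_aux (T : X ≃ₜ X) {M : Set X} (h : IsMinimalSet T M) :
    IsMinimalSet T.symm M := by
  obtain ⟨h1, h2, h3, h4⟩ := h
  refine ⟨h1, h2, image_symm_eq_aux T h3, ?_⟩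
  intro M' hM' hM'n hM'cl hM'inv
  apply h4 M' hM' hM'n hM'cl
  have := image_symm_eq_aux T.symm hM'inv
  simpa using this

end MetricAux

/-- A compact metric system is proximal iff it has a fixed point which is the unique minimal
subset; consequently if `(X,T)` is proximal then so is `(X,T⁻¹)`. -/
theorem stmt6 {X : Type*} [MetricSpace X] [CompactSpace X] [Nonempty X] (T : X ≃ₜ X) :
    (ProximalSystem T ↔
      ∃ e : X, T e = e ∧ IsMinimalSet T {e} ∧ ∀ M : Set X, IsMinimalSet T M → M = {e}) ∧
    (ProximalSystem T → ProximalSystem T.symm) := by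
  constructor
  · constructor
    · exact forward_aux T
    · rintro ⟨e, he, -, huniq⟩
      exact backward_aux T e he huniq
  · intro h
    obtain ⟨e, he, -, huniq⟩ := forward_aux T h
    apply backward_aux T.symm e
    · conv_lhs => rw [← he]
      exact T.symm_apply_apply e
    · intro M hM
      apply huniq
      have := minimal_symm_aux T.symm hM
      simpa using this
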